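/- Let A ∈ ℝ^{n×n}, C ∈ ℝ^{q×n}, and x ∈ ℝ^n, and let t_f > 0. If C·exp(tA)·x = 0 for all t ∈ [0, t_f] and ⋂_{k=0}^{n−1} ker(C A^k) = {0}, then x = 0. -/

import Mathlib

open Matrix

section Aux

attribute [local instance] Matrix.linftyOpNormedRing Matrix.linftyOpNormedAlgebra

/-- The linear map `M ↦ (B * M).mulVec x` as a continuous linear map. -/
noncomputable def obsCLM {n q : ℕ} (B : Matrix (Fin q) (Fin n) ℝ) (x : Fin n → ℝ) :
    Matrix (Fin n) (Fin n) ℝ →L[ℝ] (Fin q → ℝ) :=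
  LinearMap.toContinuousLinearMap
    { toFun := fun M => (B * M).mulVec x
      map_add' := by intro M N; show (B*(M+N)) *ᵥ x = _; rw [Matrix.mul_add, Matrix.add_mulVec]
      map_smul' := by intro c M; show (B*(c • M)) *ᵥ x = _; rw [Matrix.mul_smul, Matrix.smul_mulVec]; rfl }

lemma obsCLM_apply {n q : ℕ} (B : Matrix (Fin q) (Fin n) ℝ) (x : Fin n → ℝ)
    (M : Matrix (Fin n) (Fin n) ℝ) : obsCLM B x M = (B * M).mulVec x := rfl

lemma obs_key {n q : ℕ}
    (A : Matrix (Fin n) (Fin n) ℝ) (C : Matrix (Fin q) (Fin n) ℝ)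
    (x : Fin n → ℝ) (tf : ℝ)
    (hout : ∀ t ∈ Set.Icc (0 : ℝ) tf, C.mulVec ((NormedSpace.exp (t • A)).mulVec x) = 0) :
    ∀ k : ℕ, ∀ t ∈ Set.Ico (0 : ℝ) tf,
      ((C * A ^ k) * NormedSpace.exp (t • A)).mulVec x = 0 := by
  intro k
  induction k with
  | zero =>
    intro t ht
    rw [pow_zero, Matrix.mul_one, ← Matrix.mulVec_mulVec]
    exact hout t ⟨ht.1, ht.2.le⟩
  | succ k ih =>
    intro t ht
    -- the function F s = (C * A^k * exp(s•A)).mulVec x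
    set F : ℝ → (Fin q → ℝ) := fun s => obsCLM (C * A ^ k) x (NormedSpace.exp (s • A)) with hF
    have hd : HasDerivAt F
        (obsCLM (C * A ^ k) x (NormedSpace.exp (t • A) * A)) t := by
      have h1 : HasDerivAt (fun s : ℝ => NormedSpace.exp (s • A))
          (NormedSpace.exp (t • A) * A) t := hasDerivAt_exp_smul_const A t
      exact (obsCLM (C * A ^ k) x).hasFDerivAt.comp_hasDerivAt t h1
    -- F vanishes on [t, tf)
    have hmem : Set.Ico t tf ∈ nhdsWithin t (Set.Ici t) :=
      Ico_mem_nhdsGE_of_mem ⟨le_refl t, ht.2⟩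
    have hzero : ∀ s ∈ Set.Ico t tf, F s = 0 := by
      intro s hs
      have := ih s ⟨ht.1.trans hs.1, hs.2⟩
      simpa [hF, obsCLM_apply] using this
    have heq : F =ᶠ[nhdsWithin t (Set.Ici t)] (fun _ => (0 : Fin q → ℝ)) :=
      Filter.eventuallyEq_of_mem hmem hzero
    have h2 : HasDerivWithinAt F (0 : Fin q → ℝ) (Set.Ici t) t := by
      refine (hasDerivWithinAt_const t (Set.Ici t) (0 : Fin q → ℝ)).congr_of_eventuallyEq heq ?_
      exact hzero t ⟨le_refl t, ht.2⟩
    have h1 : HasDerivWithinAt F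
        (obsCLM (C * A ^ k) x (NormedSpace.exp (t • A) * A)) (Set.Ici t) t :=
      hd.hasDerivWithinAt
    have hud : UniqueDiffWithinAt ℝ (Set.Ici t) t := uniqueDiffOn_Ici t t Set.self_mem_Ici
    have hdz : obsCLM (C * A ^ k) x (NormedSpace.exp (t • A) * A) = 0 := by
      rw [← h1.derivWithin hud, h2.derivWithin hud]
    -- rearrange: exp(t•A) commutes with A
    have hcomm : NormedSpace.exp (t • A) * A = A * NormedSpace.exp (t • A) :=
      (((Commute.refl A).smul_right t).exp_right).symm
    rw [obsCLM_apply, hcomm] at hdz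
    have hre : C * A ^ (k + 1) * NormedSpace.exp (t • A)
        = C * A ^ k * (A * NormedSpace.exp (t • A)) := by
      simp only [pow_succ, Matrix.mul_assoc]
    rw [hre]
    exact hdz

end Aux

/-- **Observability forces vanishing outputs to come from the zero state.** If
`C · exp(tA) · x = 0` for all `t ∈ [0, t_f]` (with `t_f > 0`) and the pair `(A, C)` is
observable (i.e. `⋂_{k<n} ker(C A^k) = {0}`), then `x = 0`. -/
theorem observable_zero_output_implies_zero_state {n q : ℕ}
    (A : Matrix (Fin n) (Fin n) ℝ) (C : Matrix (Fin q) (Fin n) ℝ)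
    (x : Fin n → ℝ) (tf : ℝ) (htf : 0 < tf)
    (hout : ∀ t ∈ Set.Icc (0 : ℝ) tf, C.mulVec ((NormedSpace.exp (t • A)).mulVec x) = 0)
    (hobs : ∀ v : Fin n → ℝ, (∀ k : ℕ, k < n → C.mulVec ((A ^ k).mulVec v) = 0) → v = 0) :
    x = 0 := by
  apply hobs
  intro k _
  have h := obs_key A C x tf hout k 0 ⟨le_refl 0, htf⟩
  rw [zero_smul, NormedSpace.exp_zero, Matrix.mul_one, ← Matrix.mulVec_mulVec] at h
  exact h
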